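/- Let a_r, λ, β_r, P, σ₀², σ_s², η₀, ζ, d_s, α, D, p_r, q_r, σ_re² > 0. Let X, d, Y be independent random variables with X having CDF γ(p_r, √x/q_r)/Γ(p_r) on [0, ∞), d having density z ↦ 2z/D² on [0, D], and Y exponential with mean σ_re². Define γ_r = a_r·λ·β_r·P·G_c / ( λ·β_r·W + Y·P + σ₀² ), where G_c = η₀²·(d_s·d)^{−α}·X and W = η₀·d^{−α}·σ_s²·ζ. Then the ergodic data rate of U_r with ipSIC satisfies E[log₂(1 + γ_r)] = (1/ln 2) · ∫_0^∞ (1/(1 + x)) · [ 1 − F(x) ] dx, where F(x) = ∫_0^∞ ∫_0^D (1/σ_re²)·e^{−y/σ_re²} · (2z/D²) · γ( p_r, √(T_x(y, z))/q_r )/Γ(p_r) dz dy and T_x(y, z) = (x·d_s^α/(a_r·P))·( ζ·σ_s²/η₀ + (z^α/η₀²)·( y·P/(β_r·λ) + σ₀²/(β_r·λ) ) ). -/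

import Mathlib

open scoped ENNReal

open MeasureTheory ProbabilityTheory

/-- The lower incomplete gamma function `γ(p, t) = ∫_0^t u^{p−1} e^{−u} du`. -/
noncomputable def lowerGamma (p t : ℝ) : ℝ :=
  ∫ u in Set.Ioc (0 : ℝ) t, u ^ (p - 1) * Real.exp (-u)

lemma aux_lg_integrableOn (p : ℝ) (hp : 0 < p) :
    IntegrableOn (fun u : ℝ => u ^ (p - 1) * Real.exp (-u)) (Set.Ioi 0) := by
  have := Real.GammaIntegral_convergent hp
  exact this.congr_fun (fun x _ => mul_comm _ _) measurableSet_Ioi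

lemma aux_lg_mono (p : ℝ) (hp : 0 < p) : Monotone (lowerGamma p) := by
  intro t1 t2 h
  unfold lowerGamma
  apply setIntegral_mono_set
  · exact (aux_lg_integrableOn p hp).mono_set Set.Ioc_subset_Ioi_self
  · filter_upwards [self_mem_ae_restrict measurableSet_Ioc] with u hu
    exact mul_nonneg (Real.rpow_nonneg hu.1.le _) (Real.exp_pos _).le
  · exact HasSubset.Subset.eventuallyLE (Set.Ioc_subset_Ioc_right h)

lemma aux_lg_nonneg (p t : ℝ) : 0 ≤ lowerGamma p t := by
  apply setIntegral_nonneg measurableSet_Ioc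
  intro u hu
  exact mul_nonneg (Real.rpow_nonneg hu.1.le _) (Real.exp_pos _).le

lemma aux_cont_inv (g : ℝ) :
    ContinuousOn (fun x : ℝ => (1+x)⁻¹) (Set.Icc 0 g) := by
  apply ContinuousOn.inv₀ (by fun_prop)
  intro x hx
  nlinarith [hx.1]

lemma aux_log_int (g : ℝ) (hg : 0 ≤ g) :
    ∫ x in Set.Ioo (0:ℝ) g, (1+x)⁻¹ = Real.log (1+g) := by
  have h1 : ∫ x in Set.Ioo (0:ℝ) g, (1+x)⁻¹ = ∫ x in (0:ℝ)..g, (1+x)⁻¹ := by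
    rw [intervalIntegral.integral_of_le hg, integral_Ioc_eq_integral_Ioo]
  rw [h1]
  have : ∀ x ∈ Set.uIcc (0:ℝ) g, HasDerivAt (fun t => Real.log (1+t)) ((1+x)⁻¹) x := by
    intro x hx
    rw [Set.uIcc_of_le hg] at hx
    have h0 : (1:ℝ) + x ≠ 0 := by nlinarith [hx.1]
    have := (Real.hasDerivAt_log h0).comp x ((hasDerivAt_id x).const_add 1)
    simp only [mul_one] at this
    exact this
  rw [intervalIntegral.integral_eq_sub_of_hasDerivAt this ?int]
  · simp
  case int =>
    apply ContinuousOn.intervalIntegrable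
    rw [Set.uIcc_of_le hg]
    exact aux_cont_inv g

lemma aux_log_layer (g : ℝ) (hg : 0 ≤ g) :
    ENNReal.ofReal (Real.log (1 + g)) =
      ∫⁻ x in Set.Ioi (0:ℝ), (Set.Iio g).indicator (fun x => ENNReal.ofReal ((1+x)⁻¹)) x := by
  rw [lintegral_indicator measurableSet_Iio, Measure.restrict_restrict measurableSet_Iio]
  have hset : Set.Iio g ∩ Set.Ioi 0 = Set.Ioo 0 g := by
    ext x; simp [Set.mem_Ioo, and_comm]
  rw [hset]
  have hi : IntegrableOn (fun x : ℝ => (1+x)⁻¹) (Set.Ioo 0 g) :=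
    ((aux_cont_inv g).integrableOn_compact isCompact_Icc).mono_set Set.Ioo_subset_Icc_self
  rw [← ofReal_integral_eq_lintegral_ofReal hi ?pos, aux_log_int g hg]
  case pos =>
    filter_upwards [self_mem_ae_restrict measurableSet_Ioo] with x hx
    have : (0:ℝ) < 1 + x := by nlinarith [hx.1]
    positivity

lemma aux_alg (a l b P η0 σs ζ σ0 x u y A B : ℝ)
    (ha : 0 < a) (hl : 0 < l) (hb : 0 < b) (hP : 0 < P) (hη : 0 < η0) (hσs : 0 < σs)
    (hζ : 0 < ζ) (hσ0 : 0 < σ0) (hA : 0 < A) (hB : 0 < B) (hy : 0 ≤ y) :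
    a * l * b * P * (η0 ^ 2 * (B * A)⁻¹ * u) / (l * b * (η0 * A⁻¹ * σs * ζ) + y * P + σ0) ≤ x
      ↔ u ≤ x * B / (a * P) * (ζ * σs / η0 + A / η0 ^ 2 * (y * P / (b * l) + σ0 / (b * l))) := by
  have hDn : 0 < l * b * (η0 * A⁻¹ * σs * ζ) + y * P + σ0 := by positivity
  have hC : 0 < a * l * b * P * η0 ^ 2 * (B * A)⁻¹ := by positivity
  rw [div_le_iff₀ hDn]
  have e1 : a * l * b * P * (η0 ^ 2 * (B * A)⁻¹ * u)
      = u * (a * l * b * P * η0 ^ 2 * (B * A)⁻¹) := by ring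
  have e2 : x * B / (a * P) * (ζ * σs / η0 + A / η0 ^ 2 * (y * P / (b * l) + σ0 / (b * l)))
      = x * (l * b * (η0 * A⁻¹ * σs * ζ) + y * P + σ0) / (a * l * b * P * η0 ^ 2 * (B * A)⁻¹) := by
    field_simp
    ring
  rw [e1, e2, le_div_iff₀ hC]

set_option maxHeartbeats 2000000 in
/-- exact integral content of Theorem 3 (before quadrature): the ergodic
rate of the strong user `U_r` with ipSIC equals
`(1/ln 2)∫_0^∞ (1/(1+x))(1 − F(x)) dx`, where `F(x)` is the double integral of the
Gamma-type CDF against the exponential residual-interference and distance densities. -/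
theorem stmt_16 (a_r lam βr P σ0sq σssq η0 ζ ds α D p_r q_r σre : ℝ)
    (har : 0 < a_r) (hlam : 0 < lam) (hβr : 0 < βr)
    (hP : 0 < P) (hσ0 : 0 < σ0sq) (hσs : 0 < σssq) (hη0 : 0 < η0) (hζ : 0 < ζ)
    (hds : 0 < ds) (hα : 0 < α) (hD : 0 < D) (hp : 0 < p_r) (hq : 0 < q_r)
    (hσre : 0 < σre)
    (T : ℝ → ℝ → ℝ → ℝ)
    (hT : ∀ x y z : ℝ, T x y z = x * ds ^ α / (a_r * P) *
      (ζ * σssq / η0 + z ^ α / η0 ^ 2 * (y * P / (βr * lam) + σ0sq / (βr * lam))))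
    (F : ℝ → ℝ)
    (hF : ∀ x : ℝ, F x = ∫ y in Set.Ioi (0 : ℝ), ∫ z in Set.Icc (0 : ℝ) D,
      1 / σre ^ 2 * Real.exp (-y / σre ^ 2) * (2 * z / D ^ 2) *
        (lowerGamma p_r (Real.sqrt (T x y z) / q_r) / Real.Gamma p_r))
    (Ω : Type) [MeasureSpace Ω] (hprob : IsProbabilityMeasure (ℙ : Measure Ω))
    (X d Y : Ω → ℝ) (hXm : Measurable X) (hdm : Measurable d) (hYm : Measurable Y)
    (hindep : iIndepFun ![X, d, Y] (ℙ : Measure Ω))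
    (hX0 : ∀ᵐ ω ∂(ℙ : Measure Ω), 0 ≤ X ω)
    (hXcdf : ∀ x : ℝ, 0 ≤ x → (ℙ : Measure Ω) {ω | X ω ≤ x}
      = ENNReal.ofReal (lowerGamma p_r (Real.sqrt x / q_r) / Real.Gamma p_r))
    (hd : Measure.map d (ℙ : Measure Ω) = (volume.restrict (Set.Icc 0 D)).withDensity
      (fun z => ENNReal.ofReal (2 * z / D ^ 2)))
    (hY : Measure.map Y (ℙ : Measure Ω) = expMeasure (1 / σre ^ 2))
    (Gc W : Ω → ℝ)
    (hGc : ∀ ω, Gc ω = η0 ^ 2 * (ds * d ω) ^ (-α) * X ω)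
    (hW : ∀ ω, W ω = η0 * d ω ^ (-α) * σssq * ζ) :
    ∫ ω, Real.logb 2 (1 +
        a_r * lam * βr * P * Gc ω / (lam * βr * W ω + Y ω * P + σ0sq)) ∂(ℙ : Measure Ω)
      = (1 / Real.log 2) *
          ∫ x in Set.Ioi (0 : ℝ), 1 / (1 + x) * (1 - F x) := by
  haveI := hprob
  -- the SINR as a function
  obtain ⟨γf, hγf⟩ : ∃ γf : Ω → ℝ, ∀ ω, γf ω =
      a_r * lam * βr * P * (η0 ^ 2 * (ds * d ω) ^ (-α) * X ω) /
        (lam * βr * (η0 * d ω ^ (-α) * σssq * ζ) + Y ω * P + σ0sq) := ⟨_, fun _ => rfl⟩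
  have hγrw : ∀ ω, a_r * lam * βr * P * Gc ω / (lam * βr * W ω + Y ω * P + σ0sq) = γf ω := by
    intro ω; rw [hGc, hW, hγf]
  have hγm : Measurable γf := by
    rw [funext hγf]; fun_prop
  -- measurability of the CDF
  have hcdfm : Measurable (fun t : ℝ => lowerGamma p_r (Real.sqrt t / q_r) / Real.Gamma p_r) :=
    (((aux_lg_mono p_r hp).measurable).comp
      ((Real.continuous_sqrt.measurable).div_const q_r)).div_const _
  have hcdf_nonneg : ∀ t : ℝ, 0 ≤ lowerGamma p_r (Real.sqrt t / q_r) / Real.Gamma p_r :=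
    fun t => div_nonneg (aux_lg_nonneg _ _) (Real.Gamma_pos_of_pos hp).le
  have hcdf_le_one : ∀ t : ℝ, 0 ≤ t →
      lowerGamma p_r (Real.sqrt t / q_r) / Real.Gamma p_r ≤ 1 := by
    intro t ht
    rw [← ENNReal.ofReal_le_one, ← hXcdf t ht]
    exact prob_le_one
  -- a.e. facts
  have h0d : Measure.map d (ℙ : Measure Ω) ((Set.Icc (0:ℝ) D)ᶜ) = 0 := by
    rw [hd, withDensity_apply _ measurableSet_Icc.compl,
      Measure.restrict_restrict measurableSet_Icc.compl, Set.compl_inter_self,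
      Measure.restrict_empty, lintegral_zero_measure]
  have h0Y : Measure.map Y (ℙ : Measure Ω) (Set.Iio 0) = 0 := by
    rw [hY]
    show (volume.withDensity (gammaPDF 1 (1 / σre ^ 2))) (Set.Iio 0) = 0
    rw [withDensity_apply _ measurableSet_Iio]
    exact lintegral_gammaPDF_of_nonpos le_rfl
  have hdae : ∀ᵐ ω ∂(ℙ : Measure Ω), d ω ∈ Set.Ioc 0 D := by
    rw [ae_iff]
    have hsub : {ω | ¬ d ω ∈ Set.Ioc 0 D} ⊆ d ⁻¹' ((Set.Icc 0 D)ᶜ ∪ {0}) := by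
      intro ω hω
      simp only [Set.mem_setOf_eq, Set.mem_Ioc, not_and_or, not_lt, not_le] at hω
      by_cases hmem : d ω ∈ Set.Icc 0 D
      · right
        rcases hω with h | h
        · exact le_antisymm h hmem.1
        · exact absurd hmem.2 (not_le.mpr h)
      · exact Or.inl hmem
    apply measure_mono_null hsub
    rw [← Measure.map_apply hdm (measurableSet_Icc.compl.union (measurableSet_singleton 0))]
    have hz0 : (Measure.map d (ℙ : Measure Ω)) {0} = 0 := by
      rw [hd, withDensity_apply _ (measurableSet_singleton 0),
        Measure.restrict_restrict (measurableSet_singleton 0)]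
      exact setLIntegral_measure_zero _ _
        (measure_mono_null Set.inter_subset_left Real.volume_singleton)
    apply le_antisymm _ (by simp)
    refine le_trans (measure_union_le _ _) ?_
    rw [h0d, hz0, zero_add]
  have hYae : ∀ᵐ ω ∂(ℙ : Measure Ω), 0 ≤ Y ω := by
    rw [ae_iff]
    have : {ω | ¬ 0 ≤ Y ω} = Y ⁻¹' (Set.Iio 0) := by ext ω; simp [not_le]
    rw [this, ← Measure.map_apply hYm measurableSet_Iio, h0Y]
  have hγ0 : ∀ᵐ ω ∂(ℙ : Measure Ω), 0 ≤ γf ω := by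
    filter_upwards [hdae, hYae, hX0] with ω hz hy hX
    rw [hγf]
    have h1 : 0 ≤ (ds * d ω) ^ (-α) := Real.rpow_nonneg (mul_nonneg hds.le hz.1.le) _
    have h2 : 0 ≤ d ω ^ (-α) := Real.rpow_nonneg hz.1.le _
    apply div_nonneg
    · apply mul_nonneg (by positivity)
      exact mul_nonneg (mul_nonneg (by positivity) h1) hX
    · have : 0 ≤ lam * βr * (η0 * d ω ^ (-α) * σssq * ζ) :=
        mul_nonneg (by positivity) (mul_nonneg (mul_nonneg (mul_nonneg hη0.le h2) hσs.le) hζ.le)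
      nlinarith [mul_nonneg hy hP.le]
  -- nonnegativity of T
  have hTnn : ∀ x y z : ℝ, 0 ≤ x → 0 ≤ y → 0 ≤ z → 0 ≤ T x y z := by
    intro x y z hx hy hz
    rw [hT]
    have h1 : 0 ≤ z ^ α := Real.rpow_nonneg hz _
    have h2 : 0 ≤ ds ^ α := Real.rpow_nonneg hds.le _
    apply mul_nonneg
    · exact div_nonneg (mul_nonneg hx h2) (by positivity)
    · apply add_nonneg
      · positivity
      · apply mul_nonneg (div_nonneg h1 (by positivity))
        apply add_nonneg <;> positivity
  -- F is nonnegative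
  have hF0 : ∀ x : ℝ, 0 ≤ F x := by
    intro x
    rw [hF]
    apply setIntegral_nonneg measurableSet_Ioi
    intro y _
    apply setIntegral_nonneg measurableSet_Icc
    intro z hz
    have := hcdf_nonneg (T x y z)
    have h2 : (0:ℝ) ≤ 2 * z / D ^ 2 := div_nonneg (by linarith [hz.1]) (by positivity)
    have h3 : (0:ℝ) < Real.exp (-y / σre ^ 2) := Real.exp_pos _
    positivity
  -- probability measure instances for the pushforwards
  haveI hiX : IsProbabilityMeasure (Measure.map X (ℙ : Measure Ω)) :=
    Measure.isProbabilityMeasure_map hXm.aemeasurable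
  haveI hiY : IsProbabilityMeasure (Measure.map Y (ℙ : Measure Ω)) :=
    Measure.isProbabilityMeasure_map hYm.aemeasurable
  haveI hid : IsProbabilityMeasure (Measure.map d (ℙ : Measure Ω)) :=
    Measure.isProbabilityMeasure_map hdm.aemeasurable
  -- independence
  have hfm : ∀ i, Measurable (![X, d, Y] i) := by
    intro i; fin_cases i
    · exact hXm
    · exact hdm
    · exact hYm
  have h12 : IndepFun Y d (ℙ : Measure Ω) := by
    have := hindep.indepFun (show (2 : Fin 3) ≠ 1 by decide)
    simpa using this
  have hVX : IndepFun (fun ω => (Y ω, d ω)) X (ℙ : Measure Ω) := by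
    have := hindep.indepFun_prodMk hfm 2 1 0 (by decide) (by decide)
    simpa using this
  have hmap1 : Measure.map (fun ω => (Y ω, d ω)) (ℙ : Measure Ω)
      = (Measure.map Y (ℙ : Measure Ω)).prod (Measure.map d (ℙ : Measure Ω)) :=
    (indepFun_iff_map_prod_eq_prod_map_map hYm.aemeasurable hdm.aemeasurable).mp h12
  have hmap2 : Measure.map (fun ω => ((Y ω, d ω), X ω)) (ℙ : Measure Ω)
      = ((Measure.map Y (ℙ : Measure Ω)).prod (Measure.map d (ℙ : Measure Ω))).prod
          (Measure.map X (ℙ : Measure Ω)) := by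
    rw [← hmap1]
    exact (indepFun_iff_map_prod_eq_prod_map_map
      (hYm.prodMk hdm).aemeasurable hXm.aemeasurable).mp hVX
  -- the core identity
  have hFP : ∀ x : ℝ, 0 < x → (ℙ : Measure Ω) {ω | γf ω ≤ x} = ENNReal.ofReal (F x) := by
    intro x hx
    have hTxm : Measurable (fun p : ℝ × ℝ => T x p.1 p.2) := by
      simp only [hT]; fun_prop
    have hSm : MeasurableSet {p : (ℝ × ℝ) × ℝ | p.2 ≤ T x p.1.1 p.1.2} :=
      measurableSet_le measurable_snd (hTxm.comp measurable_fst)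
    have hiff : ∀ᵐ ω ∂(ℙ : Measure Ω), (γf ω ≤ x ↔ X ω ≤ T x (Y ω) (d ω)) := by
      filter_upwards [hdae, hYae] with ω hz hy
      have hz0 := hz.1
      have hA : (0:ℝ) < d ω ^ α := Real.rpow_pos_of_pos hz0 α
      have hB : (0:ℝ) < ds ^ α := Real.rpow_pos_of_pos hds α
      have e1 : (ds * d ω) ^ (-α) = (ds ^ α * d ω ^ α)⁻¹ := by
        rw [Real.rpow_neg (mul_nonneg hds.le hz0.le), Real.mul_rpow hds.le hz0.le]
      have e2 : d ω ^ (-α) = (d ω ^ α)⁻¹ := Real.rpow_neg hz0.le α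
      rw [hγf, e1, e2, hT]
      exact aux_alg a_r lam βr P η0 σssq ζ σ0sq x (X ω) (Y ω) (d ω ^ α) (ds ^ α)
        har hlam hβr hP hη0 hσs hζ hσ0 hA hB hy
    have hev : (ℙ : Measure Ω) {ω | γf ω ≤ x}
        = (ℙ : Measure Ω) {ω | X ω ≤ T x (Y ω) (d ω)} := by
      apply measure_congr
      rw [Filter.eventuallyEq_set]
      filter_upwards [hiff] with ω h
      exact h
    have hmapped : (ℙ : Measure Ω) {ω | X ω ≤ T x (Y ω) (d ω)}
        = (((Measure.map Y (ℙ : Measure Ω)).prod (Measure.map d (ℙ : Measure Ω))).prod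
            (Measure.map X (ℙ : Measure Ω))) {p : (ℝ × ℝ) × ℝ | p.2 ≤ T x p.1.1 p.1.2} := by
      rw [← hmap2, Measure.map_apply ((hYm.prodMk hdm).prodMk hXm) hSm]
      rfl
    have h1 : ∀ᵐ p ∂((Measure.map Y (ℙ : Measure Ω)).prod (Measure.map d (ℙ : Measure Ω))),
        0 ≤ p.1 := by
      rw [ae_iff]
      have hs : {p : ℝ × ℝ | ¬ 0 ≤ p.1} = Set.Iio 0 ×ˢ Set.univ := by
        ext p; simp [not_le]
      rw [hs, Measure.prod_prod, h0Y, zero_mul]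
    have h2 : ∀ᵐ p ∂((Measure.map Y (ℙ : Measure Ω)).prod (Measure.map d (ℙ : Measure Ω))),
        p.2 ∈ Set.Icc 0 D := by
      rw [ae_iff]
      have hs : {p : ℝ × ℝ | ¬ p.2 ∈ Set.Icc 0 D} = Set.univ ×ˢ (Set.Icc 0 D)ᶜ := by
        ext p; simp
      rw [hs, Measure.prod_prod, h0d, mul_zero]
    have hcongr : ∀ᵐ p ∂((Measure.map Y (ℙ : Measure Ω)).prod (Measure.map d (ℙ : Measure Ω))),
        (Measure.map X (ℙ : Measure Ω))
            (Prod.mk p ⁻¹' {q : (ℝ × ℝ) × ℝ | q.2 ≤ T x q.1.1 q.1.2})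
          = ENNReal.ofReal (lowerGamma p_r (Real.sqrt (T x p.1 p.2) / q_r) / Real.Gamma p_r) := by
      filter_upwards [h1, h2] with p hp1 hp2
      have ht0 : 0 ≤ T x p.1 p.2 := hTnn x p.1 p.2 hx.le hp1 hp2.1
      have hpre : Prod.mk p ⁻¹' {q : (ℝ × ℝ) × ℝ | q.2 ≤ T x q.1.1 q.1.2}
          = Set.Iic (T x p.1 p.2) := rfl
      rw [hpre, Measure.map_apply hXm measurableSet_Iic]
      exact hXcdf _ ht0
    have hfu : Measurable (fun p : ℝ × ℝ =>
        ENNReal.ofReal (lowerGamma p_r (Real.sqrt (T x p.1 p.2) / q_r) / Real.Gamma p_r)) :=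
      (hcdfm.comp hTxm).ennreal_ofReal
    rw [hev, hmapped, Measure.prod_apply hSm, lintegral_congr_ae hcongr,
      lintegral_prod _ hfu.aemeasurable]
    -- reduce the distance marginal
    have hinner : ∀ y : ℝ,
        (∫⁻ z, ENNReal.ofReal (lowerGamma p_r (Real.sqrt (T x y z) / q_r) / Real.Gamma p_r)
          ∂(Measure.map d (ℙ : Measure Ω)))
        = ∫⁻ z in Set.Icc (0:ℝ) D, ENNReal.ofReal (2 * z / D ^ 2) *
            ENNReal.ofReal (lowerGamma p_r (Real.sqrt (T x y z) / q_r) / Real.Gamma p_r) := by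
      intro y
      have hgm : Measurable (fun z : ℝ =>
          ENNReal.ofReal (lowerGamma p_r (Real.sqrt (T x y z) / q_r) / Real.Gamma p_r)) :=
        (hcdfm.comp (hTxm.comp (measurable_const.prodMk measurable_id))).ennreal_ofReal
      rw [hd, lintegral_withDensity_eq_lintegral_mul _ (by fun_prop) hgm]
      rfl
    have hKm : Measurable (fun y : ℝ => ∫⁻ z in Set.Icc (0:ℝ) D,
        ENNReal.ofReal (2 * z / D ^ 2) *
          ENNReal.ofReal (lowerGamma p_r (Real.sqrt (T x y z) / q_r) / Real.Gamma p_r)) := by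
      exact Measurable.lintegral_prod_right'
        (f := fun p : ℝ × ℝ => ENNReal.ofReal (2 * p.2 / D ^ 2) *
          ENNReal.ofReal (lowerGamma p_r (Real.sqrt (T x p.1 p.2) / q_r) / Real.Gamma p_r))
        (((by fun_prop : Measurable (fun p : ℝ × ℝ => ENNReal.ofReal (2 * p.2 / D ^ 2))).mul
          ((hcdfm.comp hTxm).ennreal_ofReal)))
    -- reduce the exponential marginal
    have houter : ∀ K : ℝ → ℝ≥0∞, Measurable K →
        (∫⁻ y, K y ∂(Measure.map Y (ℙ : Measure Ω)))
          = ∫⁻ y in Set.Ioi (0:ℝ),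
              ENNReal.ofReal (1 / σre ^ 2 * Real.exp (-y / σre ^ 2)) * K y := by
      intro K hKm'
      have hpdfm : Measurable (gammaPDF 1 (1 / σre ^ 2)) :=
        (measurable_gammaPDFReal 1 (1 / σre ^ 2)).ennreal_ofReal
      rw [hY,
        show expMeasure (1 / σre ^ 2) = volume.withDensity (gammaPDF 1 (1 / σre ^ 2)) from rfl,
        lintegral_withDensity_eq_lintegral_mul _ hpdfm hKm',
        ← lintegral_add_compl _ measurableSet_Iio]
      have hzero : ∫⁻ y in Set.Iio (0:ℝ), (gammaPDF 1 (1 / σre ^ 2) * K) y = 0 := by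
        rw [setLIntegral_congr_fun_ae measurableSet_Iio (ae_of_all _ (fun y (hy : y < 0) => by
          rw [Pi.mul_apply, gammaPDF_of_neg hy, zero_mul])), lintegral_zero]
      rw [hzero, zero_add, Set.compl_Iio, ← Measure.restrict_congr_set Ioi_ae_eq_Ici]
      apply setLIntegral_congr_fun_ae measurableSet_Ioi
      apply ae_of_all
      intro y hy
      have hpdf : gammaPDF 1 (1 / σre ^ 2) y
          = ENNReal.ofReal (1 / σre ^ 2 * Real.exp (-y / σre ^ 2)) := by
        rw [show gammaPDF 1 (1 / σre ^ 2) y = exponentialPDF (1 / σre ^ 2) y from rfl,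
          exponentialPDF_of_nonneg (le_of_lt hy)]
        congr 1
        rw [show -(1 / σre ^ 2 * y) = -y / σre ^ 2 by ring]
      rw [Pi.mul_apply, hpdf]
    -- identify with F
    have hA : ENNReal.ofReal (F x)
        = ∫⁻ y in Set.Ioi (0:ℝ), ENNReal.ofReal (1 / σre ^ 2 * Real.exp (-y / σre ^ 2)) *
            ∫⁻ z in Set.Icc (0:ℝ) D, ENNReal.ofReal (2 * z / D ^ 2) *
              ENNReal.ofReal (lowerGamma p_r (Real.sqrt (T x y z) / q_r) / Real.Gamma p_r) := by
      have hgm : Measurable (fun p : ℝ × ℝ =>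
          1 / σre ^ 2 * Real.exp (-p.1 / σre ^ 2) * (2 * p.2 / D ^ 2) *
            (lowerGamma p_r (Real.sqrt (T x p.1 p.2) / q_r) / Real.Gamma p_r)) := by
        apply Measurable.mul _ (hcdfm.comp hTxm)
        fun_prop
      have hg_nonneg : ∀ y z : ℝ, z ∈ Set.Icc (0:ℝ) D →
          0 ≤ 1 / σre ^ 2 * Real.exp (-y / σre ^ 2) * (2 * z / D ^ 2) *
            (lowerGamma p_r (Real.sqrt (T x y z) / q_r) / Real.Gamma p_r) := by
        intro y z hz
        have h1 := hcdf_nonneg (T x y z)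
        have h2 : (0:ℝ) ≤ 2 * z / D ^ 2 := div_nonneg (by linarith [hz.1]) (by positivity)
        have h3 : (0:ℝ) < Real.exp (-y / σre ^ 2) := Real.exp_pos _
        positivity
      have hg_bdd : ∀ y z : ℝ, 0 ≤ y → z ∈ Set.Icc (0:ℝ) D →
          ‖1 / σre ^ 2 * Real.exp (-y / σre ^ 2) * (2 * z / D ^ 2) *
            (lowerGamma p_r (Real.sqrt (T x y z) / q_r) / Real.Gamma p_r)‖
            ≤ 1 / σre ^ 2 * Real.exp (-y / σre ^ 2) * (2 / D) := by
        intro y z hy hz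
        rw [Real.norm_eq_abs, abs_of_nonneg (hg_nonneg y z hz)]
        have h1 := hcdf_le_one (T x y z) (hTnn x y z hx.le hy hz.1)
        have h2 : 2 * z / D ^ 2 ≤ 2 / D := by
          rw [div_le_div_iff₀ (by positivity) hD]
          nlinarith [hz.2]
        have h2' : (0:ℝ) ≤ 2 * z / D ^ 2 := div_nonneg (by linarith [hz.1]) (by positivity)
        have h3 : (0:ℝ) < 1 / σre ^ 2 * Real.exp (-y / σre ^ 2) := by positivity
        have step1 : 1 / σre ^ 2 * Real.exp (-y / σre ^ 2) * (2 * z / D ^ 2) *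
            (lowerGamma p_r (Real.sqrt (T x y z) / q_r) / Real.Gamma p_r)
            ≤ 1 / σre ^ 2 * Real.exp (-y / σre ^ 2) * (2 * z / D ^ 2) * 1 :=
          mul_le_mul_of_nonneg_left h1 (mul_nonneg h3.le h2')
        rw [mul_one] at step1
        exact le_trans step1 (mul_le_mul_of_nonneg_left h2 h3.le)
      have hgint : ∀ y : ℝ, 0 ≤ y → IntegrableOn (fun z =>
          1 / σre ^ 2 * Real.exp (-y / σre ^ 2) * (2 * z / D ^ 2) *
            (lowerGamma p_r (Real.sqrt (T x y z) / q_r) / Real.Gamma p_r)) (Set.Icc 0 D) := by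
        intro y hy
        constructor
        · exact (hgm.comp (measurable_const.prodMk measurable_id)).aestronglyMeasurable
        · apply HasFiniteIntegral.of_bounded
            (C := 1 / σre ^ 2 * Real.exp (-y / σre ^ 2) * (2 / D))
          filter_upwards [self_mem_ae_restrict measurableSet_Icc] with z hz
          exact hg_bdd y z hy hz
      have hGmeas : AEStronglyMeasurable (fun y => ∫ z in Set.Icc (0:ℝ) D,
          1 / σre ^ 2 * Real.exp (-y / σre ^ 2) * (2 * z / D ^ 2) *
            (lowerGamma p_r (Real.sqrt (T x y z) / q_r) / Real.Gamma p_r))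
          (volume.restrict (Set.Ioi 0)) :=
        (hgm.stronglyMeasurable.integral_prod_right').aestronglyMeasurable
      have hGint : IntegrableOn (fun y => ∫ z in Set.Icc (0:ℝ) D,
          1 / σre ^ 2 * Real.exp (-y / σre ^ 2) * (2 * z / D ^ 2) *
            (lowerGamma p_r (Real.sqrt (T x y z) / q_r) / Real.Gamma p_r)) (Set.Ioi 0) := by
        have hdom : IntegrableOn
            (fun y : ℝ => 2 / σre ^ 2 * Real.exp (-(1 / σre ^ 2) * y)) (Set.Ioi 0) :=
          (exp_neg_integrableOn_Ioi 0 (by positivity)).const_mul _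
        apply Integrable.mono' hdom hGmeas
        filter_upwards [self_mem_ae_restrict measurableSet_Ioi] with y hy
        have hb := norm_setIntegral_le_of_norm_le_const
          (show volume (Set.Icc (0:ℝ) D) < ⊤ from measure_Icc_lt_top)
          (fun z hz => hg_bdd y z (le_of_lt hy) hz)
        refine le_trans hb (le_of_eq ?_)
        rw [Real.volume_real_Icc_of_le (by linarith),
          show -(1 / σre ^ 2) * y = -y / σre ^ 2 by ring]
        field_simp
        ring
      rw [hF, ofReal_integral_eq_lintegral_ofReal hGint
        (ae_of_all _ (fun y => setIntegral_nonneg measurableSet_Icc (fun z hz => hg_nonneg y z hz)))]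
      apply lintegral_congr_ae
      filter_upwards [self_mem_ae_restrict measurableSet_Ioi] with y hy
      have hmul : Measurable (fun z : ℝ => ENNReal.ofReal (2 * z / D ^ 2) *
          ENNReal.ofReal (lowerGamma p_r (Real.sqrt (T x y z) / q_r) / Real.Gamma p_r)) :=
        (by fun_prop : Measurable (fun z : ℝ => ENNReal.ofReal (2 * z / D ^ 2))).mul
          ((hcdfm.comp (hTxm.comp (measurable_const.prodMk measurable_id))).ennreal_ofReal)
      rw [ofReal_integral_eq_lintegral_ofReal (hgint y hy.le)
        (by filter_upwards [self_mem_ae_restrict measurableSet_Icc] with z hz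
            exact hg_nonneg y z hz),
        ← lintegral_const_mul _ hmul]
      apply setLIntegral_congr_fun_ae measurableSet_Icc
      apply ae_of_all
      intro z hz
      have h2' : (0:ℝ) ≤ 2 * z / D ^ 2 := div_nonneg (by linarith [hz.1]) (by positivity)
      rw [show 1 / σre ^ 2 * Real.exp (-y / σre ^ 2) * (2 * z / D ^ 2) *
            (lowerGamma p_r (Real.sqrt (T x y z) / q_r) / Real.Gamma p_r)
          = (1 / σre ^ 2 * Real.exp (-y / σre ^ 2)) * ((2 * z / D ^ 2) *
            (lowerGamma p_r (Real.sqrt (T x y z) / q_r) / Real.Gamma p_r)) from by ring,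
        ENNReal.ofReal_mul (by positivity), ENNReal.ofReal_mul h2']
    dsimp only
    simp_rw [hinner]
    rw [houter _ hKm]
    exact hA.symm
  have hF1 : ∀ x : ℝ, 0 < x → F x ≤ 1 := by
    intro x hx
    rw [← ENNReal.ofReal_le_one, ← hFP x hx]
    exact prob_le_one
  -- layer-cake computation in ℝ≥0∞
  have hindset : MeasurableSet {p : Ω × ℝ | p.2 < γf p.1} :=
    measurableSet_lt measurable_snd (hγm.comp measurable_fst)
  have hFfm : Measurable (fun p : Ω × ℝ => ENNReal.ofReal ((1 + p.2)⁻¹) *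
      ({p : Ω × ℝ | p.2 < γf p.1}).indicator (fun _ => (1 : ℝ≥0∞)) p) :=
    (by fun_prop : Measurable (fun p : Ω × ℝ => ENNReal.ofReal ((1 + p.2)⁻¹))).mul
      (measurable_const.indicator hindset)
  have key : (∫⁻ ω, ENNReal.ofReal (Real.log (1 + γf ω)) ∂(ℙ : Measure Ω))
      = ∫⁻ x in Set.Ioi (0:ℝ), ENNReal.ofReal (1 / (1 + x) * (1 - F x)) := by
    have step1 : (∫⁻ ω, ENNReal.ofReal (Real.log (1 + γf ω)) ∂(ℙ : Measure Ω))
        = ∫⁻ ω, (∫⁻ x in Set.Ioi (0:ℝ), ENNReal.ofReal ((1 + x)⁻¹) *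
            ({p : Ω × ℝ | p.2 < γf p.1}).indicator (fun _ => (1 : ℝ≥0∞)) (ω, x)) ∂(ℙ : Measure Ω) := by
      apply lintegral_congr_ae
      filter_upwards [hγ0] with ω hω
      rw [aux_log_layer _ hω]
      apply lintegral_congr
      intro x
      by_cases hxlt : x < γf ω
      · simp [Set.indicator_apply, hxlt]
      · simp [Set.indicator_apply, hxlt]
    have step2 : (∫⁻ ω, (∫⁻ x in Set.Ioi (0:ℝ), ENNReal.ofReal ((1 + x)⁻¹) *
            ({p : Ω × ℝ | p.2 < γf p.1}).indicator (fun _ => (1 : ℝ≥0∞)) (ω, x)) ∂(ℙ : Measure Ω))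
        = ∫⁻ x in Set.Ioi (0:ℝ), ∫⁻ ω, ENNReal.ofReal ((1 + x)⁻¹) *
            ({p : Ω × ℝ | p.2 < γf p.1}).indicator (fun _ => (1 : ℝ≥0∞)) (ω, x) ∂(ℙ : Measure Ω) :=
      lintegral_lintegral_swap hFfm.aemeasurable
    rw [step1, step2]
    apply setLIntegral_congr_fun_ae measurableSet_Ioi
    apply ae_of_all
    intro x hx
    have hset : MeasurableSet {ω | x < γf ω} := measurableSet_lt measurable_const hγm
    have e3 : ∀ ω : Ω, ({p : Ω × ℝ | p.2 < γf p.1}).indicator (fun _ => (1 : ℝ≥0∞)) (ω, x)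
        = ({ω : Ω | x < γf ω}).indicator (1 : Ω → ℝ≥0∞) ω := by
      intro ω
      by_cases h : x < γf ω
      · simp [Set.indicator_apply, h]
      · simp [Set.indicator_apply, h]
    simp_rw [e3]
    rw [lintegral_const_mul _ (measurable_one.indicator hset), lintegral_indicator_one hset]
    have hc : {ω | x < γf ω} = {ω | γf ω ≤ x}ᶜ := by
      ext ω; simp [not_le]
    rw [hc, prob_compl_eq_one_sub (measurableSet_le hγm measurable_const), hFP x hx,
      ← ENNReal.ofReal_one, ← ENNReal.ofReal_sub _ (hF0 x),
      ← ENNReal.ofReal_mul (inv_nonneg.mpr (by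
        have hxx : (0:ℝ) < x := hx
        linarith) : (0:ℝ) ≤ (1 + x)⁻¹), one_div]
  -- final real conversions
  have hlog_nn : 0 ≤ᵐ[(ℙ : Measure Ω)] fun ω => Real.log (1 + γf ω) := by
    filter_upwards [hγ0] with ω h
    show (0:ℝ) ≤ Real.log (1 + γf ω)
    exact Real.log_nonneg (by linarith)
  have hlog_asm : AEStronglyMeasurable (fun ω => Real.log (1 + γf ω)) (ℙ : Measure Ω) :=
    (Real.measurable_log.comp (measurable_const.add hγm)).aestronglyMeasurable
  have hΦm : Measurable (fun x : ℝ => ((ℙ : Measure Ω) {ω | γf ω ≤ x}).toReal) := by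
    apply Monotone.measurable
    intro u v huv
    apply ENNReal.toReal_mono (measure_ne_top _ _)
    apply measure_mono
    intro ω h
    exact le_trans h huv
  have hRHS_eq : ∀ᵐ x ∂(volume.restrict (Set.Ioi (0:ℝ))),
      1 / (1 + x) * (1 - ((ℙ : Measure Ω) {ω | γf ω ≤ x}).toReal)
        = 1 / (1 + x) * (1 - F x) := by
    filter_upwards [self_mem_ae_restrict measurableSet_Ioi] with x hx
    rw [hFP x hx, ENNReal.toReal_ofReal (hF0 x)]
  have hRHS_asm : AEStronglyMeasurable (fun x => 1 / (1 + x) * (1 - F x))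
      (volume.restrict (Set.Ioi (0:ℝ))) := by
    apply AEStronglyMeasurable.congr _ hRHS_eq
    exact ((by fun_prop : Measurable (fun x : ℝ => 1 / (1 + x))).mul
      (measurable_const.sub hΦm)).aestronglyMeasurable
  have hRHS_nn : 0 ≤ᵐ[volume.restrict (Set.Ioi (0:ℝ))] fun x => 1 / (1 + x) * (1 - F x) := by
    filter_upwards [self_mem_ae_restrict measurableSet_Ioi] with x hx
    have hx0 : (0:ℝ) < 1 + x := by
      have : (0:ℝ) < x := hx
      linarith
    have h1 := hF1 x hx
    show (0:ℝ) ≤ 1 / (1 + x) * (1 - F x)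
    exact mul_nonneg (by positivity) (by linarith)
  simp only [hγrw]
  simp only [Real.logb]
  rw [integral_div, integral_eq_lintegral_of_nonneg_ae hlog_nn hlog_asm, key,
    integral_eq_lintegral_of_nonneg_ae hRHS_nn hRHS_asm]
  ring
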